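/- For every prime p and every Baxter C-algebra (R,P) of weight λ, and every finite sequence a_1, …, a_n of elements of R, (a_1 · P(a_2 · P(a_3 ⋯ P(a_n)⋯)))^p ≡ λ^{(n-1)(p-1)} · a_1^p · P(a_2^p · P(a_3^p ⋯ P(a_n^p)⋯)) modulo the ideal p·R. (This is the image in any Baxter algebra of the tensor identity (a_1⊗⋯⊗a_n)^p ≡ λ^{(n-1)(p-1)} a_1^p⊗⋯⊗a_n^p mod p in the free Baxter algebra.) -/

import Mathlib

/-- `nest P [a₁, …, aₙ] = a₁ · P(a₂ · P(a₃ ⋯ P(aₙ)⋯))`, the image in a Baxter algebra of the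
pure tensor `a₁ ⊗ ⋯ ⊗ aₙ` of the free Baxter algebra. -/
def nest {R : Type*} [CommRing R] (P : R → R) : List R → R
  | [] => 1
  | [a] => a
  | a :: b :: l => a * P (nest P (b :: l))

open Finset in
lemma polyId (p : ℕ) (hp : p.Prime) :
    (∑ i ∈ Finset.range p, (MvPolynomial.X 0 + MvPolynomial.X 1) ^ i * (MvPolynomial.X 1) ^ (p - 1 - i)
      : MvPolynomial (Fin 2) (ZMod p)) = (MvPolynomial.X 0) ^ (p - 1) := by
  haveI : Fact p.Prime := ⟨hp⟩
  apply mul_left_cancel₀ (MvPolynomial.X_ne_zero (R := ZMod p) 0)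
  have h := geom_sum₂_mul (MvPolynomial.X 0 + MvPolynomial.X 1 : MvPolynomial (Fin 2) (ZMod p)) (MvPolynomial.X 1) p
  have hfrob := add_pow_char (MvPolynomial.X 0 : MvPolynomial (Fin 2) (ZMod p)) (MvPolynomial.X 1) p
  calc (MvPolynomial.X 0 : MvPolynomial (Fin 2) (ZMod p)) * ∑ i ∈ Finset.range p, (MvPolynomial.X 0 + MvPolynomial.X 1) ^ i * (MvPolynomial.X 1) ^ (p - 1 - i)
      = (∑ i ∈ Finset.range p, (MvPolynomial.X 0 + MvPolynomial.X 1) ^ i * (MvPolynomial.X 1) ^ (p - 1 - i)) * ((MvPolynomial.X 0 + MvPolynomial.X 1) - MvPolynomial.X 1) := by ring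
    _ = (MvPolynomial.X 0 + MvPolynomial.X 1) ^ p - (MvPolynomial.X 1) ^ p := h
    _ = (MvPolynomial.X 0) ^ p := by rw [hfrob]; ring
    _ = MvPolynomial.X 0 * MvPolynomial.X 0 ^ (p - 1) := by
        rw [← pow_succ']
        congr 1
        have := hp.one_lt; omega

section Key
variable {C R : Type*} [CommRing C] [CommRing R] [Algebra C R]
    (lam : C) (P : R →ₗ[C] R)
    (hP : ∀ x y : R, P x * P y = P (x * P y) + P (P x * y) + algebraMap C R lam * P (x * y))
    (p : ℕ)

local notation "π" => Ideal.Quotient.mk (Ideal.span {(p : R)})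

lemma P_cong {u v : R} (h : π u = π v) : π (P u) = π (P v) := by
  rw [Ideal.Quotient.eq] at h ⊢
  rw [Ideal.mem_span_singleton] at h ⊢
  obtain ⟨c, hc⟩ := h
  refine ⟨P c, ?_⟩
  have : P u - P v = P (u - v) := (map_sub P u v).symm
  rw [this, hc]
  calc P ((p : R) * c) = P ((p : ℕ) • c) := by rw [nsmul_eq_mul]
    _ = (p : ℕ) • P c := map_nsmul P p c
    _ = (p : R) * P c := nsmul_eq_mul p (P c)

lemma P_smul_alg (c : C) (z : R) : P (algebraMap C R c * z) = algebraMap C R c * P z := by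
  rw [← Algebra.smul_def, map_smul, Algebra.smul_def]

include hP in
lemma hA (x y : R) :
    P x * P y = P ((algebraMap C R lam * x + P x) * y + x * P y) := by
  have h1 : (algebraMap C R lam * x + P x) * y + x * P y
      = algebraMap C R lam * (x * y) + (P x * y + x * P y) := by ring
  rw [h1, map_add, map_add, P_smul_alg, hP x y]
  ring

include hP in
lemma hB (x : R) : ∀ n : ℕ,
    P x ^ (n + 1) = P (x * ∑ i ∈ Finset.range (n + 1),
      (algebraMap C R lam * x + P x) ^ i * (P x) ^ (n - i))
  | 0 => by simp
  | n + 1 => by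
    set la := algebraMap C R lam with hla
    set θ := la * x + P x with hθ
    have sumrec : (∑ i ∈ Finset.range (n + 2), θ ^ i * (P x) ^ (n + 1 - i))
        = θ * (∑ i ∈ Finset.range (n + 1), θ ^ i * (P x) ^ (n - i)) + (P x) ^ (n + 1) := by
      rw [Finset.sum_range_succ']
      simp only [pow_zero, Nat.sub_zero, one_mul, Nat.succ_sub_succ]
      rw [Finset.mul_sum]
      congr 1
      refine Finset.sum_congr rfl fun i _ => ?_
      ring
    have ih := hB x n
    calc P x ^ (n + 2) = P x * P x ^ (n + 1) := by ring
      _ = P x * P (x * ∑ i ∈ Finset.range (n + 1), θ ^ i * (P x) ^ (n - i)) := by rw [ih]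
      _ = P (θ * (x * ∑ i ∈ Finset.range (n + 1), θ ^ i * (P x) ^ (n - i))
            + x * P (x * ∑ i ∈ Finset.range (n + 1), θ ^ i * (P x) ^ (n - i))) := hA lam P hP x _
      _ = P (θ * (x * ∑ i ∈ Finset.range (n + 1), θ ^ i * (P x) ^ (n - i))
            + x * P x ^ (n + 1)) := by rw [← ih]
      _ = P (x * ∑ i ∈ Finset.range (n + 2), θ ^ i * (P x) ^ (n + 1 - i)) := by
            rw [sumrec]; congr 1; ring

include hP in
lemma P_key (hp : p.Prime) (x : R) :
    π (P x ^ p) = π ((algebraMap C R lam) ^ (p - 1) * P (x ^ p)) := by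
  set la := algebraMap C R lam with hla
  obtain ⟨n, rfl⟩ : ∃ n, p = n + 1 := ⟨p - 1, by have := hp.pos; omega⟩
  set pr := Ideal.Quotient.mk (Ideal.span {((n + 1 : ℕ) : R)}) with hpr
  set Q := R ⧸ Ideal.span {((n + 1 : ℕ) : R)} with hQ
  have hpQ : ((n + 1 : ℕ) : Q) = 0 := by
    have h0 : (((n + 1 : ℕ) : R)) ∈ Ideal.span {((n + 1 : ℕ) : R)} :=
      Ideal.mem_span_singleton_self _
    have := (Ideal.Quotient.eq_zero_iff_mem).mpr h0
    rw [← this]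
    simp
  haveI : CharP Q (ringChar Q) := ringChar.charP Q
  have hdvd : ringChar Q ∣ (n + 1) := ringChar.dvd hpQ
  let φ : ZMod (n + 1) →+* Q := ZMod.castHom hdvd Q
  let ev : MvPolynomial (Fin 2) (ZMod (n + 1)) →+* Q :=
    MvPolynomial.eval₂Hom φ ![pr (la * x), pr (P x)]
  have hsum : (∑ i ∈ Finset.range (n + 1), (pr (la * x) + pr (P x)) ^ i * (pr (P x)) ^ (n - i))
      = (pr (la * x)) ^ n := by
    have := congrArg ev (polyId (n + 1) hp)
    simp only [ev, map_sum, map_mul, map_pow, map_add, MvPolynomial.eval₂Hom_X'] at this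
    simpa using this
  have hB' := hB lam P hP x n
  have step1 : pr (P x ^ (n + 1)) = pr (P (x * ∑ i ∈ Finset.range (n + 1),
      (la * x + P x) ^ i * (P x) ^ (n - i))) := by rw [hB']
  have step2 : pr (x * ∑ i ∈ Finset.range (n + 1), (la * x + P x) ^ i * (P x) ^ (n - i))
      = pr (la ^ n * x ^ (n + 1)) := by
    rw [map_mul, map_sum]
    simp only [map_mul, map_pow, map_add] at hsum ⊢
    rw [hsum, mul_pow]
    ring
  have step3 := P_cong (P := P) (p := n + 1) step2
  have step4 : P (la ^ n * x ^ (n + 1)) = la ^ n * P (x ^ (n + 1)) := by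
    rw [hla, ← map_pow]
    exact P_smul_alg P _ _
  show pr (P x ^ (n + 1)) = pr (la ^ (n + 1 - 1) * P (x ^ (n + 1)))
  rw [step1, step3, step4]
  norm_num
  rfl

end Key

/-- For a Baxter `C`-algebra `(R, P)` of weight `λ`, a prime `p` and `a₁, …, aₙ ∈ R` (`n ≥ 1`),
`(a₁·P(a₂·P(⋯P(aₙ)⋯)))^p ≡ λ^{(n-1)(p-1)} a₁^p·P(a₂^p·P(⋯P(aₙ^p)⋯)) (mod p)`. -/
theorem baxter_fermat_tensor {C R : Type*} [CommRing C] [CommRing R] [Algebra C R]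
    (lam : C) (P : R →ₗ[C] R)
    (hP : ∀ x y : R, P x * P y = P (x * P y) + P (P x * y) + algebraMap C R lam * P (x * y))
    (p : ℕ) (hp : p.Prime) (l : List R) (hl : l ≠ []) :
    (nest (⇑P) l) ^ p -
        (algebraMap C R lam) ^ ((l.length - 1) * (p - 1)) *
          nest (⇑P) (l.map (fun a => a ^ p)) ∈ Ideal.span {(p : R)} := by
  rw [← Ideal.Quotient.eq_zero_iff_mem, map_sub, sub_eq_zero]
  set la := algebraMap C R lam with hla
  revert hl
  induction l with
  | nil => intro h; exact absurd rfl h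
  | cons a t ih =>
    intro _
    cases t with
    | nil => simp [nest]
    | cons b t' =>
      have IH := ih (by simp)
      simp only [List.length_cons, Nat.add_sub_cancel] at IH ⊢
      set N := nest (⇑P) (b :: t') with hN
      set M := nest (⇑P) ((b :: t').map (fun a => a ^ p)) with hM
      set k := t'.length with hk
      have h1 : nest (⇑P) (a :: b :: t') = a * P N := rfl
      have h2 : nest (⇑P) ((a :: b :: t').map (fun a => a ^ p)) = a ^ p * P M := rfl
      rw [h1, h2]
      have hkey := P_key lam P hP p hp N
      have hcong := P_cong P p IH
      have hPs : P (la ^ (k * (p - 1)) * M) = la ^ (k * (p - 1)) * P M := by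
        rw [hla, ← map_pow]; exact P_smul_alg P _ _
      have hpow : la ^ ((k + 1) * (p - 1)) = la ^ (p - 1) * la ^ (k * (p - 1)) := by
        rw [← pow_add]; congr 1; ring
      set π := Ideal.Quotient.mk (Ideal.span {(p : R)}) with hπ
      calc π ((a * P N) ^ p)
          = π (a ^ p) * π (P N ^ p) := by rw [← map_mul, mul_pow]
        _ = π (a ^ p) * π (la ^ (p - 1) * P (N ^ p)) := by rw [hkey]
        _ = π (a ^ p) * (π (la ^ (p - 1)) * π (P (N ^ p))) := by rw [map_mul]
        _ = π (a ^ p) * (π (la ^ (p - 1)) * π (P (la ^ (k * (p - 1)) * M))) := by rw [hcong]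
        _ = π (a ^ p) * (π (la ^ (p - 1)) * π (la ^ (k * (p - 1)) * P M)) := by rw [hPs]
        _ = π (la ^ ((k + 1) * (p - 1)) * (a ^ p * P M)) := by
            rw [← map_mul, ← map_mul, hpow]; congr 1; ring
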